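/- Assume A : [0,T] → ℝ^{N×N} and B : [0,T] → ℝ^{N×M} are continuous, C : [0,T] → ℝ^{P×N} and d : [0,T] → ℝ^P are continuously differentiable, x₀ ∈ ℝ^N satisfies C(0)x₀ < d(0) componentwise, and set R := (1+‖x₀‖)·exp(T·sup_t‖A(t)‖ + T·M_u·sup_t‖B(t)‖) for a given M_u > 0. Assume the inward-pointing condition: for all t ∈ [0,T] and x with ‖x‖ ≤ R and C(t)x ≤ d(t), there exists u with ‖u‖ ≤ M_u such that c_i'(t)ᵀx − d_i'(t) + c_i(t)ᵀ(A(t)x + B(t)u) < 0 for every i with c_i(t)ᵀx = d_i(t). For ε ∈ ℝ^P with nonnegative entries define 𝒜_ε := {(t,x) : t ∈ [0,T], C(t)x + ε ≤ d(t)} and its slices 𝒜_{ε,t} := {x : (t,x) ∈ 𝒜_ε}. Then there exist ε₀ ∈ ℝ^P with positive entries and constants M_v > 0, ξ > 0, η > 0 such that: for every ε ∈ ℝ^P with 0 ≤ ε ≤ ε₀ componentwise and every (t,x) ∈ (∂𝒜_ε + ({0} × ηB_N)) ∩ 𝒜_ε with ‖x‖ ≤ R−1, there exists u with ‖u‖ ≤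 M_u such that v := A(t)x + B(t)u satisfies ‖v‖ ≤ M_v and, for all δ ∈ [0,ξ] with t+δ ∈ [0,T] and all y ∈ (x + ξB_N) ∩ 𝒜_{ε,t}, the inclusion y + δ(v + ξB_N) ⊆ 𝒜_{ε,t+δ} holds. -/

import Mathlib

open scoped RealInnerProductSpace
open Set

lemma finPosMin {P : ℕ} (r : Fin P → ℝ) (hr : ∀ i, 0 < r i) :
    ∃ m : ℝ, 0 < m ∧ ∀ i, m ≤ r i := by
  rcases isEmpty_or_nonempty (Fin P) with h | h
  · exact ⟨1, one_pos, fun i => (h.false i).elim⟩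
  · obtain ⟨i0, -, hmin⟩ := Finset.exists_min_image Finset.univ r ⟨h.some, Finset.mem_univ _⟩
    exact ⟨r i0, hr i0, fun i => hmin i (Finset.mem_univ i)⟩

theorem margin_aux
    (N M P : ℕ) (T Mu Rad : ℝ)
    (A : ℝ → EuclideanSpace ℝ (Fin N) →L[ℝ] EuclideanSpace ℝ (Fin N))
    (B : ℝ → EuclideanSpace ℝ (Fin M) →L[ℝ] EuclideanSpace ℝ (Fin N))
    (hA : Continuous A) (hB : Continuous B)
    (c : Fin P → ℝ → EuclideanSpace ℝ (Fin N)) (d : Fin P → ℝ → ℝ)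
    (cd : Fin P → ℝ → EuclideanSpace ℝ (Fin N)) (dd : Fin P → ℝ → ℝ)
    (hc : ∀ i t, HasDerivAt (c i) (cd i t) t) (hcd : ∀ i, Continuous (cd i))
    (hd : ∀ i t, HasDerivAt (d i) (dd i t) t) (hdd : ∀ i, Continuous (dd i))
    (hIP : ∀ t ∈ Set.Icc (0:ℝ) T, ∀ x : EuclideanSpace ℝ (Fin N),
      ‖x‖ ≤ Rad → (∀ i, ⟪c i t, x⟫ ≤ d i t) →
      ∃ u : EuclideanSpace ℝ (Fin M), ‖u‖ ≤ Mu ∧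
        ∀ i, ⟪c i t, x⟫ = d i t →
          ⟪cd i t, x⟫ - dd i t + ⟪c i t, A t x + B t u⟫ < 0) :
    ∃ θ ρ : ℝ, 0 < θ ∧ 0 < ρ ∧ ∀ t ∈ Set.Icc (0:ℝ) T, ∀ x : EuclideanSpace ℝ (Fin N),
      ‖x‖ ≤ Rad → (∀ i, ⟪c i t, x⟫ ≤ d i t) →
      ∃ u : EuclideanSpace ℝ (Fin M), ‖u‖ ≤ Mu ∧ ∀ i, d i t - θ ≤ ⟪c i t, x⟫ →
        ⟪cd i t, x⟫ - dd i t + ⟪c i t, A t x + B t u⟫ ≤ -ρ := by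
  classical
  have hcc : ∀ i, Continuous (c i) := fun i =>
    continuous_iff_continuousAt.2 fun t => (hc i t).continuousAt
  have hdc : ∀ i, Continuous (d i) := fun i =>
    continuous_iff_continuousAt.2 fun t => (hd i t).continuousAt
  set K : Set (ℝ × EuclideanSpace ℝ (Fin N)) :=
    {p | p.1 ∈ Set.Icc (0:ℝ) T ∧ ‖p.2‖ ≤ Rad ∧ ∀ i, ⟪c i p.1, p.2⟫ ≤ d i p.1} with hK
  have hKclosed : IsClosed K := by
    have h1 : IsClosed {p : ℝ × EuclideanSpace ℝ (Fin N) | p.1 ∈ Set.Icc (0:ℝ) T} :=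
      isClosed_Icc.preimage continuous_fst
    have h2 : IsClosed {p : ℝ × EuclideanSpace ℝ (Fin N) | ‖p.2‖ ≤ Rad} :=
      isClosed_le continuous_snd.norm continuous_const
    have h3 : ∀ i, IsClosed {p : ℝ × EuclideanSpace ℝ (Fin N) | ⟪c i p.1, p.2⟫ ≤ d i p.1} :=
      fun i => isClosed_le (((hcc i).comp continuous_fst).inner continuous_snd)
        ((hdc i).comp continuous_fst)
    have : K = {p : ℝ × EuclideanSpace ℝ (Fin N) | p.1 ∈ Set.Icc (0:ℝ) T} ∩
        ({p | ‖p.2‖ ≤ Rad} ∩ ⋂ i, {p | ⟪c i p.1, p.2⟫ ≤ d i p.1}) := by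
      ext p; simp [hK, Set.mem_iInter, and_assoc]
    rw [this]
    exact h1.inter (h2.inter (isClosed_iInter h3))
  have hKcomp : IsCompact K := by
    have hsub : K ⊆ Set.Icc (0:ℝ) T ×ˢ Metric.closedBall (0:EuclideanSpace ℝ (Fin N)) Rad := by
      rintro ⟨t, x⟩ ⟨h1, h2, -⟩
      exact ⟨h1, by simpa [Metric.mem_closedBall, dist_eq_norm] using h2⟩
    exact ((isCompact_Icc).prod (isCompact_closedBall (0:EuclideanSpace ℝ (Fin N)) Rad)).of_isClosed_subset hKclosed hsub
  have key : ∀ p ∈ K, ∃ (u : EuclideanSpace ℝ (Fin M)) (m : ℝ)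
      (V : Set (ℝ × EuclideanSpace ℝ (Fin N))), 0 < m ∧ ‖u‖ ≤ Mu ∧ IsOpen V ∧ p ∈ V ∧
      ∀ q ∈ V, ∀ i, d i q.1 - ⟪c i q.1, q.2⟫ ≤ m/2 →
        ⟪cd i q.1, q.2⟫ - dd i q.1 + ⟪c i q.1, A q.1 q.2 + B q.1 u⟫ ≤ -(m/2) := by
    rintro ⟨t, x⟩ ⟨ht, hx, hcons⟩
    obtain ⟨u, hu, hstrict⟩ := hIP t ht x hx hcons
    set F : Fin P → ℝ × EuclideanSpace ℝ (Fin N) → ℝ := fun i q =>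
      ⟪cd i q.1, q.2⟫ - dd i q.1 + ⟪c i q.1, A q.1 q.2 + B q.1 u⟫ with hF
    have hFcont : ∀ i, Continuous (F i) := by
      intro i
      have hv : Continuous (fun q : ℝ × EuclideanSpace ℝ (Fin N) => A q.1 q.2 + B q.1 u) :=
        ((hA.comp continuous_fst).clm_apply continuous_snd).add
          ((hB.comp continuous_fst).clm_apply continuous_const)
      exact ((((hcd i).comp continuous_fst).inner continuous_snd).sub
        ((hdd i).comp continuous_fst)).add (((hcc i).comp continuous_fst).inner hv)
    set r : Fin P → ℝ := fun i =>
      if ⟪c i t, x⟫ = d i t then -(F i (t, x)) else d i t - ⟪c i t, x⟫ with hr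
    have hrpos : ∀ i, 0 < r i := by
      intro i
      rw [hr]
      by_cases h : ⟪c i t, x⟫ = d i t
      · simp only [h, if_true, if_pos h]
        have := hstrict i h
        simp only [hF]
        linarith
      · simp only [if_neg h]
        exact sub_pos.2 (lt_of_le_of_ne (hcons i) h)
    obtain ⟨m, hm, hmr⟩ := finPosMin r hrpos
    set V : Set (ℝ × EuclideanSpace ℝ (Fin N)) := ⋂ i,
      (if ⟪c i t, x⟫ = d i t then {q | F i q < -(m/2)}
        else {q | m/2 < d i q.1 - ⟪c i q.1, q.2⟫}) with hV
    have hVopen : IsOpen V := by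
      refine isOpen_iInter_of_finite fun i => ?_
      by_cases h : ⟪c i t, x⟫ = d i t
      · rw [if_pos h]; exact isOpen_lt (hFcont i) continuous_const
      · rw [if_neg h]
        exact isOpen_lt continuous_const
          ((((hdc i).comp continuous_fst)).sub (((hcc i).comp continuous_fst).inner continuous_snd))
    have hpV : (t, x) ∈ V := by
      refine Set.mem_iInter.2 fun i => ?_
      by_cases h : ⟪c i t, x⟫ = d i t
      · rw [if_pos h]
        have h1 : m ≤ r i := hmr i
        simp only [hr, if_pos h] at h1
        show F i (t, x) < -(m/2)
        have h2 : F i (t, x) ≤ -m := le_neg.mp h1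
        have h3 : -m < -(m/2) := by linarith
        exact lt_of_le_of_lt h2 h3
      · rw [if_neg h]
        have h1 : m ≤ r i := hmr i
        simp only [hr, if_neg h] at h1
        show m/2 < d i t - ⟪c i t, x⟫
        linarith
    refine ⟨u, m, V, hm, hu, hVopen, hpV, ?_⟩
    intro q hq i hgap
    have hq' := Set.mem_iInter.1 hq i
    by_cases h : ⟪c i t, x⟫ = d i t
    · rw [if_pos h] at hq'
      exact le_of_lt hq'
    · rw [if_neg h] at hq'
      exact absurd hgap (not_le.2 hq')
  choose u m V hm hu hVopen hpV hVprop using key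
  obtain ⟨J, hJ⟩ := hKcomp.elim_finite_subcover (fun p : K => V p.1 p.2)
    (fun p => hVopen p.1 p.2) (fun q hq => Set.mem_iUnion.2 ⟨⟨q, hq⟩, hpV q hq⟩)
  rcases J.eq_empty_or_nonempty with hJe | hJne
  · refine ⟨1, 1, one_pos, one_pos, ?_⟩
    intro t ht x hx hcons
    have : (t, x) ∈ K := ⟨ht, hx, hcons⟩
    have := hJ this
    simp [hJe] at this
  · obtain ⟨p0, hp0J, hp0min⟩ := Finset.exists_min_image J (fun p => m p.1 p.2) hJne
    refine ⟨m p0.1 p0.2 / 2, m p0.1 p0.2 / 2, by linarith [hm p0.1 p0.2],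
      by linarith [hm p0.1 p0.2], ?_⟩
    intro t ht x hx hcons
    have hqK : (t, x) ∈ K := ⟨ht, hx, hcons⟩
    obtain ⟨p, hpJ, hqV⟩ := Set.mem_iUnion₂.1 (hJ hqK)
    refine ⟨u p.1 p.2, hu p.1 p.2, ?_⟩
    intro i hi
    have hmin := hp0min p hpJ
    have := hVprop p.1 p.2 (t, x) hqV i (by simp only []; linarith)
    simp only [] at this ⊢
    linarith
set_option maxHeartbeats 1000000 in
/-- Under continuity of `A, B`, `C¹`-smoothness of `cᵢ, dᵢ`, strict
feasibility of `x₀` and the inward-pointing condition at radius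
`R = (1+‖x₀‖)exp(T·sup‖A‖ + T·M_u·sup‖B‖)`, there are `ε₀ > 0` (componentwise) and
constants `M_v, ξ, η > 0` such that for every `0 ≤ ε ≤ ε₀` and every point `(t,x)` of the
shrunk constraint set `𝒜_ε` that is within distance `η` (in space, at the same time) of
the relative boundary `∂𝒜_ε` and with `‖x‖ ≤ R−1`, there is a control `u`, `‖u‖ ≤ M_u`,
whose velocity `v = A(t)x + B(t)u` satisfies `‖v‖ ≤ M_v` and the uniform tangential
inclusion `y + δ(v + ξ𝔹_N) ⊆ 𝒜_{ε,t+δ}` for all `δ ∈ [0,ξ]` with `t+δ ∈ [0,T]` and all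
`y ∈ (x + ξ𝔹_N) ∩ 𝒜_{ε,t}`. -/
theorem inward_pointing_tangential_viability
    (N M P : ℕ) (T : ℝ) (hT : 0 < T)
    (A : ℝ → EuclideanSpace ℝ (Fin N) →L[ℝ] EuclideanSpace ℝ (Fin N))
    (B : ℝ → EuclideanSpace ℝ (Fin M) →L[ℝ] EuclideanSpace ℝ (Fin N))
    (hA : Continuous A) (hB : Continuous B)
    (c : Fin P → ℝ → EuclideanSpace ℝ (Fin N)) (d : Fin P → ℝ → ℝ)
    (cd : Fin P → ℝ → EuclideanSpace ℝ (Fin N)) (dd : Fin P → ℝ → ℝ)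
    (hc : ∀ i t, HasDerivAt (c i) (cd i t) t) (hcd : ∀ i, Continuous (cd i))
    (hd : ∀ i t, HasDerivAt (d i) (dd i t) t) (hdd : ∀ i, Continuous (dd i))
    (x₀ : EuclideanSpace ℝ (Fin N)) (hx₀ : ∀ i, ⟪c i 0, x₀⟫ < d i 0)
    (Mu : ℝ) (hMu : 0 < Mu)
    (Rad : ℝ)
    (hRad : Rad = (1 + ‖x₀‖) *
      Real.exp (T * sSup ((fun t => ‖A t‖) '' Set.Icc 0 T) +
        T * Mu * sSup ((fun t => ‖B t‖) '' Set.Icc 0 T)))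
    (hIP : ∀ t ∈ Set.Icc (0:ℝ) T, ∀ x : EuclideanSpace ℝ (Fin N),
      ‖x‖ ≤ Rad → (∀ i, ⟪c i t, x⟫ ≤ d i t) →
      ∃ u : EuclideanSpace ℝ (Fin M), ‖u‖ ≤ Mu ∧
        ∀ i, ⟪c i t, x⟫ = d i t →
          ⟪cd i t, x⟫ - dd i t + ⟪c i t, A t x + B t u⟫ < 0)
    -- the shrunk constraint sets 𝒜_ε and their relative boundaries in [0,T] × ℝ^N
    (Aset : (Fin P → ℝ) → Set (ℝ × EuclideanSpace ℝ (Fin N)))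
    (hAset : ∀ ε, Aset ε = {q : ℝ × EuclideanSpace ℝ (Fin N) |
      q.1 ∈ Set.Icc (0:ℝ) T ∧ ∀ i, ⟪c i q.1, q.2⟫ + ε i ≤ d i q.1})
    (Bd : (Fin P → ℝ) → Set (ℝ × EuclideanSpace ℝ (Fin N)))
    (hBd : ∀ ε, Bd ε = Aset ε ∩
      closure ((Set.Icc (0:ℝ) T ×ˢ (Set.univ : Set (EuclideanSpace ℝ (Fin N)))) \
        Aset ε)) :
    ∃ ε₀ : Fin P → ℝ, (∀ i, 0 < ε₀ i) ∧
    ∃ Mv : ℝ, 0 < Mv ∧ ∃ ξ : ℝ, 0 < ξ ∧ ∃ η : ℝ, 0 < η ∧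
      ∀ ε : Fin P → ℝ, (∀ i, 0 ≤ ε i ∧ ε i ≤ ε₀ i) →
      ∀ t : ℝ, ∀ x : EuclideanSpace ℝ (Fin N),
        (t, x) ∈ Aset ε →
        (∃ x' : EuclideanSpace ℝ (Fin N), (t, x') ∈ Bd ε ∧ ‖x - x'‖ ≤ η) →
        ‖x‖ ≤ Rad - 1 →
        ∃ u : EuclideanSpace ℝ (Fin M), ‖u‖ ≤ Mu ∧
          ‖A t x + B t u‖ ≤ Mv ∧
          ∀ δ : ℝ, δ ∈ Set.Icc (0:ℝ) ξ → t + δ ∈ Set.Icc (0:ℝ) T →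
            ∀ y : EuclideanSpace ℝ (Fin N), ‖y - x‖ ≤ ξ →
              (∀ i, ⟪c i t, y⟫ + ε i ≤ d i t) →
              ∀ z : EuclideanSpace ℝ (Fin N), ‖z - (A t x + B t u)‖ ≤ ξ →
                ∀ i, ⟪c i (t + δ), y + δ • z⟫ + ε i ≤ d i (t + δ) := by
  classical
  have hcc : ∀ i, Continuous (c i) := fun i =>
    continuous_iff_continuousAt.2 fun t => (hc i t).continuousAt
  have hRadpos : 0 < Rad := by
    rw [hRad]; positivity
  obtain ⟨θ, ρ, hθ, hρ, margin⟩ := margin_aux N M P T Mu Rad A B hA hB c d cd dd hc hcd hd hdd hIP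
  obtain ⟨Ca', hCa'⟩ := (isCompact_Icc (a := (0:ℝ)) (b := T)).exists_bound_of_continuousOn
    hA.continuousOn
  obtain ⟨Cb', hCb'⟩ := (isCompact_Icc (a := (0:ℝ)) (b := T)).exists_bound_of_continuousOn
    hB.continuousOn
  obtain ⟨Ca, hCa_def⟩ : ∃ r : ℝ, r = max Ca' 0 := ⟨_, rfl⟩
  obtain ⟨Cb, hCb_def⟩ : ∃ r : ℝ, r = max Cb' 0 := ⟨_, rfl⟩
  have hCa : ∀ t ∈ Set.Icc (0:ℝ) T, ‖A t‖ ≤ Ca := fun t ht =>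
    (hCa' t ht).trans (hCa_def ▸ le_max_left _ _)
  have hCb : ∀ t ∈ Set.Icc (0:ℝ) T, ‖B t‖ ≤ Cb := fun t ht =>
    (hCb' t ht).trans (hCb_def ▸ le_max_left _ _)
  have hCa0 : 0 ≤ Ca := hCa_def ▸ le_max_right _ _
  have hCb0 : 0 ≤ Cb := hCb_def ▸ le_max_right _ _
  -- bound on the c i
  obtain ⟨Cc', hCc'⟩ := (isCompact_Icc (a := (0:ℝ)) (b := T)).exists_bound_of_continuousOn
    (continuous_pi fun i => hcc i : Continuous fun t => (fun i => c i t : Fin P → EuclideanSpace ℝ (Fin N))).continuousOn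
  obtain ⟨Cc, hCc_def⟩ : ∃ r : ℝ, r = max Cc' 0 := ⟨_, rfl⟩
  have hCc0 : 0 ≤ Cc := hCc_def ▸ le_max_right _ _
  have hCc : ∀ i, ∀ t ∈ Set.Icc (0:ℝ) T, ‖c i t‖ ≤ Cc := by
    intro i t ht
    have h1 : ‖c i t‖ ≤ ‖(fun j => c j t : Fin P → EuclideanSpace ℝ (Fin N))‖ := by
      exact norm_le_pi_norm (fun j => c j t) i
    exact h1.trans ((hCc' t ht).trans (hCc_def ▸ le_max_left _ _))
  -- velocity bound
  obtain ⟨Mv, hMv_def⟩ : ∃ r : ℝ, r = Ca * Rad + Cb * Mu + 1 := ⟨_, rfl⟩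
  have hMv : 0 < Mv := by
    have h1 : 0 ≤ Ca * Rad := mul_nonneg hCa0 hRadpos.le
    have h2 : 0 ≤ Cb * Mu := mul_nonneg hCb0 hMu.le
    rw [hMv_def]; linarith
  have hvbound : ∀ t ∈ Set.Icc (0:ℝ) T, ∀ x : EuclideanSpace ℝ (Fin N), ‖x‖ ≤ Rad →
      ∀ u : EuclideanSpace ℝ (Fin M), ‖u‖ ≤ Mu → ‖A t x + B t u‖ ≤ Ca * Rad + Cb * Mu := by
    intro t ht x hx u hu
    calc ‖A t x + B t u‖ ≤ ‖A t x‖ + ‖B t u‖ := norm_add_le _ _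
      _ ≤ ‖A t‖ * ‖x‖ + ‖B t‖ * ‖u‖ :=
          add_le_add ((A t).le_opNorm x) ((B t).le_opNorm u)
      _ ≤ Ca * Rad + Cb * Mu :=
          add_le_add (mul_le_mul (hCa t ht) hx (norm_nonneg _) hCa0)
            (mul_le_mul (hCb t ht) hu (norm_nonneg _) hCb0)
  -- the function G and its modulus of continuity / bound on compact set D
  obtain ⟨G, hG_def⟩ : ∃ G : ℝ × (EuclideanSpace ℝ (Fin N) × EuclideanSpace ℝ (Fin N)) →
      (Fin P → ℝ), G = fun q i => ⟪cd i q.1, q.2.1⟫ + ⟪c i q.1, q.2.2⟫ - dd i q.1 := ⟨_, rfl⟩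
  have hGcont : Continuous G := by
    rw [hG_def]
    refine continuous_pi fun i => ?_
    exact ((((hcd i).comp continuous_fst).inner (continuous_fst.comp continuous_snd)).add
      (((hcc i).comp continuous_fst).inner (continuous_snd.comp continuous_snd))).sub
      ((hdd i).comp continuous_fst)
  obtain ⟨D, hD_def⟩ : ∃ D : Set (ℝ × (EuclideanSpace ℝ (Fin N) × EuclideanSpace ℝ (Fin N))),
      D = Set.Icc (0:ℝ) T ×ˢ (Metric.closedBall 0 Rad ×ˢ Metric.closedBall 0 (Mv + 1)) :=
    ⟨_, rfl⟩
  have hDcomp : IsCompact D := by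
    rw [hD_def]
    exact isCompact_Icc.prod ((isCompact_closedBall _ _).prod (isCompact_closedBall _ _))
  obtain ⟨Fm', hFm'⟩ := hDcomp.exists_bound_of_continuousOn hGcont.continuousOn
  obtain ⟨Fm, hFm_def⟩ : ∃ r : ℝ, r = max Fm' 0 := ⟨_, rfl⟩
  have hFm0 : 0 ≤ Fm := hFm_def ▸ le_max_right _ _
  have hFm : ∀ q ∈ D, ∀ i, |G q i| ≤ Fm := by
    intro q hq i
    have h1 : ‖G q i‖ ≤ ‖G q‖ := norm_le_pi_norm (G q) i
    rw [Real.norm_eq_abs] at h1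
    exact h1.trans ((hFm' q hq).trans (hFm_def ▸ le_max_left _ _))
  obtain ⟨ξ₁, hξ₁, hUC⟩ := Metric.uniformContinuousOn_iff.1
    (hDcomp.uniformContinuousOn_of_continuous hGcont.continuousOn) (ρ/2) (half_pos hρ)
  -- the final constants
  obtain ⟨ξ, hξ_def⟩ : ∃ r : ℝ,
      r = min (min (θ/(4*(Cc+1))) (θ/(4*(Fm+1)))) (min (ξ₁/(Mv+3)) (1/(Mv+2))) := ⟨_, rfl⟩
  have hξ : 0 < ξ := by
    rw [hξ_def]
    exact lt_min (lt_min (div_pos hθ (by linarith)) (div_pos hθ (by linarith)))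
      (lt_min (div_pos hξ₁ (by linarith)) (div_pos one_pos (by linarith)))
  have hξCc : ξ * (4*(Cc+1)) ≤ θ := by
    have h1 : ξ ≤ θ/(4*(Cc+1)) := by
      rw [hξ_def]; exact le_trans (min_le_left _ _) (min_le_left _ _)
    rw [le_div_iff₀ (by linarith)] at h1
    linarith
  have hξFm : ξ * (4*(Fm+1)) ≤ θ := by
    have h1 : ξ ≤ θ/(4*(Fm+1)) := by
      rw [hξ_def]; exact le_trans (min_le_left _ _) (min_le_right _ _)
    rw [le_div_iff₀ (by linarith)] at h1
    linarith
  have hξξ₁ : ξ * (Mv+3) ≤ ξ₁ := by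
    have h1 : ξ ≤ ξ₁/(Mv+3) := by
      rw [hξ_def]; exact le_trans (min_le_right _ _) (min_le_left _ _)
    rw [le_div_iff₀ (by linarith)] at h1
    linarith
  have hξMv : ξ * (Mv+2) ≤ 1 := by
    have h1 : ξ ≤ 1/(Mv+2) := by
      rw [hξ_def]; exact le_trans (min_le_right _ _) (min_le_right _ _)
    rw [le_div_iff₀ (by linarith)] at h1
    linarith
  have hξ1 : ξ ≤ 1 := by nlinarith
  refine ⟨fun _ => θ/4, fun i => by positivity, Mv, hMv, ξ, hξ, 1, one_pos, ?_⟩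
  intro ε hε t x hmem _ hxR
  rw [hAset] at hmem
  obtain ⟨htI, hxcons⟩ := hmem
  have hxRad : ‖x‖ ≤ Rad := hxR.trans (by linarith)
  have hcons : ∀ i, ⟪c i t, x⟫ ≤ d i t := fun i => by
    linarith [(hε i).1, hxcons i]
  obtain ⟨u, huMu, humargin⟩ := margin t htI x hxRad hcons
  obtain ⟨v, hv_def⟩ : ∃ v : EuclideanSpace ℝ (Fin N), v = A t x + B t u := ⟨_, rfl⟩
  have hvMv : ‖v‖ ≤ Mv := by
    have := hvbound t htI x hxRad u huMu
    rw [hv_def, hMv_def]; linarith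
  refine ⟨u, huMu, hv_def ▸ hvMv, ?_⟩
  intro δ hδ htδ y hyx hycons z hzv i
  rw [← hv_def] at hzv
  have hδ0 : 0 ≤ δ := hδ.1
  have hδξ : δ ≤ ξ := hδ.2
  have hzMv : ‖z‖ ≤ Mv + 1 := by
    calc ‖z‖ = ‖z - v + v‖ := by rw [show z - v + v = z by abel]
      _ ≤ ‖z - v‖ + ‖v‖ := norm_add_le _ _
      _ ≤ ξ + Mv := add_le_add hzv hvMv
      _ ≤ Mv + 1 := by linarith
  -- the key functions
  obtain ⟨g, hg_def⟩ : ∃ g : ℝ → ℝ,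
      g = fun s => ⟪c i s, y + (s - t) • z⟫ + ε i - d i s := ⟨_, rfl⟩
  obtain ⟨g', hg'_def⟩ : ∃ g' : ℝ → ℝ,
      g' = fun s => ⟪cd i s, y + (s - t) • z⟫ + ⟪c i s, z⟫ - dd i s := ⟨_, rfl⟩
  have hg : ∀ s, HasDerivAt g (g' s) s := by
    intro s
    have h1 : HasDerivAt (fun s : ℝ => y + (s - t) • z) z s := by
      simpa using (((hasDerivAt_id s).sub_const t).smul_const z).const_add y
    have h2 : HasDerivAt (fun s => ⟪c i s, y + (s - t) • z⟫)
        (⟪c i s, z⟫ + ⟪cd i s, y + (s - t) • z⟫) s := HasDerivAt.inner ℝ (hc i s) h1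
    have h3 := (h2.add_const (ε i)).sub (hd i s)
    rw [hg_def, hg'_def]
    refine h3.congr_deriv ?_
    ring
  have hgs : ∀ s, g' s = G (s, (y + (s - t) • z, z)) i := by
    intro s; simp only [hg'_def, hG_def]
  -- membership of perturbed points in D
  have hwD : ∀ s ∈ Set.Icc t (t + δ),
      (s, (y + (s - t) • z, z)) ∈ D ∧ ‖(y + (s - t) • z) - x‖ ≤ ξ * (Mv + 2) := by
    intro s hs
    have hst0 : 0 ≤ s - t := by linarith [hs.1]
    have hstδ : s - t ≤ δ := by linarith [hs.2]
    have hw : ‖(y + (s - t) • z) - x‖ ≤ ξ * (Mv + 2) := by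
      calc ‖(y + (s - t) • z) - x‖ = ‖(y - x) + (s - t) • z‖ := by
            rw [show y + (s - t) • z - x = (y - x) + (s - t) • z by abel]
        _ ≤ ‖y - x‖ + ‖(s - t) • z‖ := norm_add_le _ _
        _ = ‖y - x‖ + (s - t) * ‖z‖ := by rw [norm_smul, Real.norm_of_nonneg hst0]
        _ ≤ ξ + ξ * (Mv + 1) := by
            refine add_le_add hyx ?_
            have h4 : s - t ≤ ξ := hstδ.trans hδξ
            nlinarith [norm_nonneg z]
        _ = ξ * (Mv + 2) := by ring
    refine ⟨?_, hw⟩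
    rw [hD_def]
    refine ⟨⟨?_, ?_⟩, ?_, ?_⟩
    · exact le_trans htI.1 hs.1
    · linarith [htδ.2, hs.2]
    · rw [Metric.mem_closedBall, dist_zero_right]
      calc ‖y + (s - t) • z‖ = ‖x + ((y + (s - t) • z) - x)‖ := by
            rw [show x + ((y + (s - t) • z) - x) = y + (s - t) • z by abel]
        _ ≤ ‖x‖ + ‖(y + (s - t) • z) - x‖ := norm_add_le _ _
        _ ≤ (Rad - 1) + ξ * (Mv + 2) := add_le_add hxR hw
        _ ≤ Rad := by linarith
    · rw [Metric.mem_closedBall, dist_zero_right]; exact hzMv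
  have htxvD : (t, (x, v)) ∈ D := by
    rw [hD_def]
    refine ⟨htI, ?_, ?_⟩
    · rw [Metric.mem_closedBall, dist_zero_right]; exact hxRad
    · rw [Metric.mem_closedBall, dist_zero_right]; linarith
  -- conclude, by cases on near-activity of constraint i at (t,x)
  have goal_of_g : g (t + δ) ≤ 0 → ⟪c i (t + δ), y + δ • z⟫ + ε i ≤ d i (t + δ) := by
    intro h
    rw [hg_def] at h
    simp only [add_sub_cancel_left] at h
    linarith
  by_cases hact : d i t - θ ≤ ⟪c i t, x⟫
  · -- nearly active: g is nonincreasing on [t, t+δ]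
    have hGtxv : G (t, (x, v)) i ≤ -ρ := by
      have h5 := humargin i hact
      simp only [hG_def]
      rw [hv_def]
      linarith
    have hd' : ∀ s ∈ Set.Icc t (t + δ), g' s ≤ -(ρ/2) := by
      intro s hs
      obtain ⟨hsD, hw⟩ := hwD s hs
      have hst0 : 0 ≤ s - t := by linarith [hs.1]
      have hstδ : s - t ≤ δ := by linarith [hs.2]
      have hdist : dist (s, (y + (s - t) • z, z)) (t, (x, v)) < ξ₁ := by
        rw [Prod.dist_eq, Prod.dist_eq]
        have h1 : dist s t < ξ₁ := by
          rw [Real.dist_eq, abs_of_nonneg hst0]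
          nlinarith
        have h2 : dist (y + (s - t) • z) x < ξ₁ := by
          rw [dist_eq_norm]
          nlinarith
        have h3 : dist z v < ξ₁ := by
          rw [dist_eq_norm]
          nlinarith
        exact max_lt h1 (max_lt h2 h3)
      have h6 := hUC _ hsD _ htxvD hdist
      have hcomp : |G (s, (y + (s - t) • z, z)) i - G (t, (x, v)) i| ≤
          dist (G (s, (y + (s - t) • z, z))) (G (t, (x, v))) := by
        rw [← Real.dist_eq]
        exact dist_le_pi_dist _ _ i
      have habs := (abs_le.1 hcomp).2
      rw [hgs s]
      linarith
    have hanti : AntitoneOn g (Set.Icc t (t + δ)) := by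
      refine antitoneOn_of_deriv_nonpos (convex_Icc t (t + δ)) ?_ ?_ ?_
      · exact (continuous_iff_continuousAt.2 fun s => (hg s).continuousAt).continuousOn
      · exact fun s _ => (hg s).differentiableAt.differentiableWithinAt
      · intro s hs
        rw [interior_Icc] at hs
        rw [(hg s).deriv]
        have h7 := hd' s (Set.mem_Icc.2 ⟨le_of_lt hs.1, le_of_lt hs.2⟩)
        linarith
    have hgt : g t ≤ 0 := by
      rw [hg_def]; simp only [sub_self, zero_smul, add_zero]
      linarith [hycons i]
    have h8 := hanti (Set.left_mem_Icc.2 (by linarith)) (Set.right_mem_Icc.2 (by linarith))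
      (by linarith : t ≤ t + δ)
    exact goal_of_g (h8.trans hgt)
  · -- inactive: use the crude bound
    push_neg at hact
    have hbound : ∀ s ∈ Set.Ico t (t + δ), ‖g' s‖ ≤ Fm := by
      intro s hs
      obtain ⟨hsD, -⟩ := hwD s (Set.mem_Icc.2 ⟨hs.1, le_of_lt hs.2⟩)
      have h9 := hFm _ hsD i
      rw [Real.norm_eq_abs, hgs s]
      exact h9
    have hMVT := norm_image_sub_le_of_norm_deriv_le_segment'
      (fun s hs => (hg s).hasDerivWithinAt) hbound (t + δ)
      (Set.right_mem_Icc.2 (by linarith))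
    rw [Real.norm_eq_abs] at hMVT
    have hMVT' : g (t + δ) ≤ g t + Fm * δ := by
      have h10 := (abs_le.1 hMVT).2
      have h11 : (t + δ) - t = δ := by ring
      rw [h11] at h10
      linarith
    have hgty : g t ≤ ⟪c i t, x⟫ + Cc * ξ + ε i - d i t := by
      rw [hg_def]
      simp only [sub_self, zero_smul, add_zero]
      have h1 : ⟪c i t, y⟫ - ⟪c i t, x⟫ = ⟪c i t, y - x⟫ := by
        rw [inner_sub_right]
      have h2 : ⟪c i t, y - x⟫ ≤ ‖c i t‖ * ‖y - x‖ := real_inner_le_norm _ _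
      have h3 : ‖c i t‖ * ‖y - x‖ ≤ Cc * ξ := by
        exact mul_le_mul (hCc i t htI) hyx (norm_nonneg _) hCc0
      linarith
    have hεθ : ε i ≤ θ/4 := (hε i).2
    have hCcξ : Cc * ξ ≤ θ/4 := by nlinarith
    have hFmδ : Fm * δ ≤ θ/4 := by nlinarith
    refine goal_of_g ?_
    linarith
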